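/- Let (Ω₁, ℬ₁) be a measurable space, (Ω₂, ℬ₂, A₂) a POVM, and κ a regular Markov kernel from Ω₂ to Ω₁. Then there exists a unique POVM A₁₂ on the product space (Ω₁ × Ω₂, ℬ₁ ⊗ ℬ₂) such that A₁₂(E₁ × E₂) = ∫_{E₂} κ(E₁ | y) dA₂(y) for all E₁ ∈ ℬ₁, E₂ ∈ ℬ₂. -/

import Mathlib

open MeasureTheory
open scoped InnerProductSpace ENNReal

/-- A positive-operator valued measure on outcome space `Ω` over the Hilbert space `H`.
σ-additivity in the weak operator topology is encoded by the family of scalar measures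
`E ↦ ⟪x, A(E) x⟫` attached to each vector `x`. -/
structure POVM (Ω : Type*) [MeasurableSpace Ω] (H : Type*) [NormedAddCommGroup H]
    [InnerProductSpace ℂ H] [CompleteSpace H] where
  toFun : Set Ω → H →L[ℂ] H
  pos : ∀ E, MeasurableSet E → (toFun E).IsPositive
  map_univ : toFun Set.univ = 1
  measure : H → MeasureTheory.Measure Ω
  measure_apply : ∀ (x : H) (E : Set Ω), MeasurableSet E →
    measure x E = ENNReal.ofReal (⟪x, toFun E x⟫_ℂ).re

set_option linter.unusedSectionVars false

namespace Stmt7Aux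

open ProbabilityTheory Set Complex

variable {H : Type*} [NormedAddCommGroup H] [InnerProductSpace ℂ H] [CompleteSpace H]
variable {Ω₁ Ω₂ : Type*} [MeasurableSpace Ω₁] [MeasurableSpace Ω₂]

variable (A₂ : POVM Ω₂ H) (κ : Kernel Ω₂ Ω₁) [IsMarkovKernel κ]

noncomputable def m (x : H) : Measure Ω₂ := A₂.measure x

lemma m_apply (x : H) {E : Set Ω₂} (hE : MeasurableSet E) :
    m A₂ x E = ENNReal.ofReal (⟪x, A₂.toFun E x⟫_ℂ).re := A₂.measure_apply x E hE

lemma form_nonneg {E : Set Ω₂} (hE : MeasurableSet E) (x : H) :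
    0 ≤ (⟪x, A₂.toFun E x⟫_ℂ).re := by
  have := (A₂.pos E hE).re_inner_nonneg_right x
  simpa using this

lemma m_univ (x : H) : m A₂ x Set.univ = ENNReal.ofReal (‖x‖ ^ 2) := by
  rw [m_apply A₂ x MeasurableSet.univ, A₂.map_univ]
  congr 1
  have := @inner_self_eq_norm_sq ℂ H _ _ _ x
  simpa using this

instance m_finite (x : H) : IsFiniteMeasure (m A₂ x) :=
  ⟨by rw [m_univ]; exact ENNReal.ofReal_lt_top⟩

noncomputable def pm (x : H) : Measure (Ω₁ × Ω₂) := ((m A₂ x).compProd κ).map Prod.swap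

lemma pm_apply (x : H) {F : Set (Ω₁ × Ω₂)} (hF : MeasurableSet F) :
    pm A₂ κ x F = ∫⁻ y, κ y {a | (a, y) ∈ F} ∂(m A₂ x) := by
  rw [pm, Measure.map_apply measurable_swap hF, Measure.compProd_apply (measurable_swap hF)]
  rfl

lemma pm_univ (x : H) : pm A₂ κ x Set.univ = ENNReal.ofReal (‖x‖ ^ 2) := by
  rw [pm_apply A₂ κ x MeasurableSet.univ]
  simp [m_univ]

lemma pm_ne_top (x : H) (F : Set (Ω₁ × Ω₂)) : pm A₂ κ x F ≠ ⊤ := by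
  have h : pm A₂ κ x F ≤ pm A₂ κ x Set.univ := measure_mono (subset_univ F)
  rw [pm_univ] at h
  exact (lt_of_le_of_lt h ENNReal.ofReal_lt_top).ne

/-! ### measure-level identities -/

lemma m_smul (c : ℂ) (x : H) : m A₂ (c • x) = ENNReal.ofReal (‖c‖ ^ 2) • m A₂ x := by
  ext E hE
  rw [Measure.smul_apply, smul_eq_mul, m_apply A₂ _ hE, m_apply A₂ _ hE,
    ← ENNReal.ofReal_mul (by positivity)]
  congr 1
  rw [_root_.map_smul, inner_smul_left, inner_smul_right, ← mul_assoc]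
  simp only [Complex.mul_re, Complex.conj_re, Complex.conj_im,
    Complex.sq_norm, Complex.normSq_apply, Complex.mul_im]
  ring

lemma m_M3 (u v w : H) :
    m A₂ (u + v + w) + m A₂ u + m A₂ v + m A₂ w
      = m A₂ (u + v) + m A₂ (v + w) + m A₂ (u + w) := by
  ext E hE
  simp only [Measure.coe_add, Pi.add_apply, m_apply A₂ _ hE]
  rw [← ENNReal.ofReal_add (form_nonneg A₂ hE _) (form_nonneg A₂ hE _),
    ← ENNReal.ofReal_add (add_nonneg (form_nonneg A₂ hE _) (form_nonneg A₂ hE _)) (form_nonneg A₂ hE _),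
    ← ENNReal.ofReal_add (add_nonneg (add_nonneg (form_nonneg A₂ hE _) (form_nonneg A₂ hE _)) (form_nonneg A₂ hE _)) (form_nonneg A₂ hE _),
    ← ENNReal.ofReal_add (form_nonneg A₂ hE _) (form_nonneg A₂ hE _),
    ← ENNReal.ofReal_add (add_nonneg (form_nonneg A₂ hE _) (form_nonneg A₂ hE _)) (form_nonneg A₂ hE _)]
  congr 1
  simp only [map_add, inner_add_left, inner_add_right, Complex.add_re]
  ring

lemma m_line (t : ℝ) (ht : 0 ≤ t) (x y : H) :
    m A₂ (x + (t : ℂ) • y) + ENNReal.ofReal t • m A₂ (x - y)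
      = m A₂ (x - (t : ℂ) • y) + ENNReal.ofReal t • m A₂ (x + y) := by
  ext E hE
  simp only [Measure.coe_add, Pi.add_apply, Measure.smul_apply, smul_eq_mul, m_apply A₂ _ hE]
  rw [← ENNReal.ofReal_mul ht, ← ENNReal.ofReal_mul ht,
    ← ENNReal.ofReal_add (form_nonneg A₂ hE _) (mul_nonneg ht (form_nonneg A₂ hE _)),
    ← ENNReal.ofReal_add (form_nonneg A₂ hE _) (mul_nonneg ht (form_nonneg A₂ hE _))]
  congr 1
  simp only [map_add, map_sub, _root_.map_smul, inner_add_left, inner_add_right, inner_sub_left,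
    inner_sub_right, inner_smul_left, inner_smul_right, Complex.conj_ofReal, Complex.add_re,
    Complex.sub_re, Complex.mul_re, Complex.ofReal_re, Complex.ofReal_im, Complex.mul_im]
  ring

end Stmt7Aux

/-! ### the quadratic form `Q` -/
namespace Stmt7Aux
open ProbabilityTheory Set Complex MeasureTheory
open scoped InnerProductSpace ENNReal

variable {H : Type*} [NormedAddCommGroup H] [InnerProductSpace ℂ H] [CompleteSpace H]
variable {Ω₁ Ω₂ : Type*} [MeasurableSpace Ω₁] [MeasurableSpace Ω₂]
variable (A₂ : POVM Ω₂ H) (κ : Kernel Ω₂ Ω₁) [IsMarkovKernel κ]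

noncomputable def Q (F : Set (Ω₁ × Ω₂)) (x : H) : ℝ := (pm A₂ κ x F).toReal

lemma Q_nonneg (F : Set (Ω₁ × Ω₂)) (x : H) : 0 ≤ Q A₂ κ F x := ENNReal.toReal_nonneg

lemma ofReal_Q (F : Set (Ω₁ × Ω₂)) (x : H) :
    ENNReal.ofReal (Q A₂ κ F x) = pm A₂ κ x F := ENNReal.ofReal_toReal (pm_ne_top A₂ κ x F)

lemma Q_univ (x : H) : Q A₂ κ Set.univ x = ‖x‖ ^ 2 := by
  rw [Q, pm_univ, ENNReal.toReal_ofReal (by positivity)]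

lemma Q_le (F : Set (Ω₁ × Ω₂)) (x : H) : Q A₂ κ F x ≤ ‖x‖ ^ 2 := by
  rw [← Q_univ A₂ κ x]
  exact ENNReal.toReal_mono (pm_ne_top A₂ κ x _) (measure_mono (subset_univ F))

variable {F : Set (Ω₁ × Ω₂)}

lemma Q_smul (hF : MeasurableSet F) (c : ℂ) (x : H) :
    Q A₂ κ F (c • x) = ‖c‖ ^ 2 * Q A₂ κ F x := by
  have hp : pm A₂ κ (c • x) F = ENNReal.ofReal (‖c‖ ^ 2) * pm A₂ κ x F := by
    rw [pm_apply A₂ κ _ hF, pm_apply A₂ κ _ hF, m_smul, lintegral_smul_measure, smul_eq_mul]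
  rw [Q, Q, hp, ENNReal.toReal_mul, ENNReal.toReal_ofReal (by positivity)]

lemma Q_neg (hF : MeasurableSet F) (x : H) : Q A₂ κ F (-x) = Q A₂ κ F x := by
  have h : (-x : H) = ((-1 : ℂ) • x) := by simp
  rw [h, Q_smul A₂ κ hF]; simp

lemma Q_zero (hF : MeasurableSet F) : Q A₂ κ F 0 = 0 := by
  have h : (0 : H) = ((0 : ℂ) • (0 : H)) := by simp
  rw [h, Q_smul A₂ κ hF]; simp

lemma Q_M3 (hF : MeasurableSet F) (u v w : H) :
    Q A₂ κ F (u + v + w) + Q A₂ κ F u + Q A₂ κ F v + Q A₂ κ F w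
      = Q A₂ κ F (u + v) + Q A₂ κ F (v + w) + Q A₂ κ F (u + w) := by
  have hp : pm A₂ κ (u + v + w) F + pm A₂ κ u F + pm A₂ κ v F + pm A₂ κ w F
      = pm A₂ κ (u + v) F + pm A₂ κ (v + w) F + pm A₂ κ (u + w) F := by
    simp only [pm_apply A₂ κ _ hF]
    simp only [← lintegral_add_measure]
    rw [m_M3]
  rw [← ofReal_Q, ← ofReal_Q, ← ofReal_Q, ← ofReal_Q, ← ofReal_Q, ← ofReal_Q, ← ofReal_Q] at hp
  have n : ∀ z : H, 0 ≤ Q A₂ κ F z := Q_nonneg A₂ κ F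
  rw [← ENNReal.ofReal_add (n _) (n _), ← ENNReal.ofReal_add (add_nonneg (n _) (n _)) (n _),
    ← ENNReal.ofReal_add (add_nonneg (add_nonneg (n _) (n _)) (n _)) (n _),
    ← ENNReal.ofReal_add (n _) (n _),
    ← ENNReal.ofReal_add (add_nonneg (n _) (n _)) (n _)] at hp
  exact (ENNReal.ofReal_eq_ofReal_iff
    (add_nonneg (add_nonneg (add_nonneg (n _) (n _)) (n _)) (n _))
    (add_nonneg (add_nonneg (n _) (n _)) (n _))).mp hp

lemma Q_line (hF : MeasurableSet F) (t : ℝ) (ht : 0 ≤ t) (x y : H) :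
    Q A₂ κ F (x + (t : ℂ) • y) + t * Q A₂ κ F (x - y)
      = Q A₂ κ F (x - (t : ℂ) • y) + t * Q A₂ κ F (x + y) := by
  have hp : pm A₂ κ (x + (t : ℂ) • y) F + ENNReal.ofReal t * pm A₂ κ (x - y) F
      = pm A₂ κ (x - (t : ℂ) • y) F + ENNReal.ofReal t * pm A₂ κ (x + y) F := by
    simp only [pm_apply A₂ κ _ hF]
    simp only [← smul_eq_mul, ← lintegral_smul_measure]
    simp only [← lintegral_add_measure]
    rw [m_line A₂ t ht]
  have n : ∀ z : H, 0 ≤ Q A₂ κ F z := Q_nonneg A₂ κ F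
  rw [← ofReal_Q, ← ofReal_Q, ← ofReal_Q, ← ofReal_Q,
    ← ENNReal.ofReal_mul ht, ← ENNReal.ofReal_mul ht,
    ← ENNReal.ofReal_add (n _) (mul_nonneg ht (n _)),
    ← ENNReal.ofReal_add (n _) (mul_nonneg ht (n _))] at hp
  exact (ENNReal.ofReal_eq_ofReal_iff (add_nonneg (n _) (mul_nonneg ht (n _)))
    (add_nonneg (n _) (mul_nonneg ht (n _)))).mp hp

end Stmt7Aux

/-! ### the sesquilinear form `Bf` -/
namespace Stmt7Aux
open ProbabilityTheory Set MeasureTheory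
open scoped InnerProductSpace ENNReal

variable {H : Type*} [NormedAddCommGroup H] [InnerProductSpace ℂ H] [CompleteSpace H]
variable {Ω₁ Ω₂ : Type*} [MeasurableSpace Ω₁] [MeasurableSpace Ω₂]
variable (A₂ : POVM Ω₂ H) (κ : Kernel Ω₂ Ω₁) [IsMarkovKernel κ]

noncomputable def Bf (F : Set (Ω₁ × Ω₂)) (x y : H) : ℂ :=
  ⟨(Q A₂ κ F (x + y) - Q A₂ κ F (x - y)) / 4,
   (Q A₂ κ F (x + Complex.I • y) - Q A₂ κ F (x - Complex.I • y)) / 4⟩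

lemma Bf_re (F : Set (Ω₁ × Ω₂)) (x y : H) :
    (Bf A₂ κ F x y).re = (Q A₂ κ F (x + y) - Q A₂ κ F (x - y)) / 4 := rfl

lemma Bf_im (F : Set (Ω₁ × Ω₂)) (x y : H) :
    (Bf A₂ κ F x y).im = (Q A₂ κ F (x + Complex.I • y) - Q A₂ κ F (x - Complex.I • y)) / 4 := rfl

lemma Bf_eq_formula (F : Set (Ω₁ × Ω₂)) (x y : H) :
    Bf A₂ κ F x y = ((Q A₂ κ F (x + y) : ℂ) - (Q A₂ κ F (x - y) : ℂ) +
      Complex.I * (Q A₂ κ F (x + Complex.I • y) : ℂ) -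
      Complex.I * (Q A₂ κ F (x - Complex.I • y) : ℂ)) / 4 := by
  apply Complex.ext <;> simp [Bf] <;> ring

variable {F : Set (Ω₁ × Ω₂)}

lemma Bf_self (hF : MeasurableSet F) (x : H) :
    Bf A₂ κ F x x = ((Q A₂ κ F x : ℝ) : ℂ) := by
  have h2 : x + x = ((2 : ℂ) • x) := (two_smul ℂ x).symm
  have hp : x + Complex.I • x = ((1 + Complex.I) • x) := by
    rw [add_smul, one_smul]
  have hm : x - Complex.I • x = ((1 - Complex.I) • x) := by
    rw [sub_smul, one_smul]
  apply Complex.ext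
  · rw [Bf_re, h2, sub_self, Q_smul A₂ κ hF, Q_zero A₂ κ hF]
    simp only [Complex.ofReal_re]
    norm_num
  · rw [Bf_im, hp, hm, Q_smul A₂ κ hF, Q_smul A₂ κ hF]
    have e1 : ‖(1 + Complex.I)‖ ^ 2 = 2 := by
      rw [Complex.sq_norm, Complex.normSq_apply]; norm_num
    have e2 : ‖(1 - Complex.I)‖ ^ 2 = 2 := by
      rw [Complex.sq_norm, Complex.normSq_apply]; norm_num
    rw [e1, e2]
    simp

lemma Bf_add_left (hF : MeasurableSet F) (x₁ x₂ y : H) :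
    Bf A₂ κ F (x₁ + x₂) y = Bf A₂ κ F x₁ y + Bf A₂ κ F x₂ y := by
  have key : ∀ w : H, Q A₂ κ F (x₁ + x₂ + w) - Q A₂ κ F (x₁ + x₂ - w)
      = (Q A₂ κ F (x₁ + w) - Q A₂ κ F (x₁ - w)) + (Q A₂ κ F (x₂ + w) - Q A₂ κ F (x₂ - w)) := by
    intro w
    have h1 := Q_M3 A₂ κ hF x₁ x₂ w
    have h2 := Q_M3 A₂ κ hF x₁ x₂ (-w)
    simp only [← sub_eq_add_neg, Q_neg A₂ κ hF] at h2
    linarith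
  apply Complex.ext
  · simp only [Bf_re, Complex.add_re, key y]; ring
  · simp only [Bf_im, Complex.add_im, key (Complex.I • y)]; ring

lemma Bf_add_right (hF : MeasurableSet F) (x y₁ y₂ : H) :
    Bf A₂ κ F x (y₁ + y₂) = Bf A₂ κ F x y₁ + Bf A₂ κ F x y₂ := by
  have key : ∀ w₁ w₂ : H, Q A₂ κ F (x + (w₁ + w₂)) - Q A₂ κ F (x - (w₁ + w₂))
      = (Q A₂ κ F (x + w₁) - Q A₂ κ F (x - w₁)) + (Q A₂ κ F (x + w₂) - Q A₂ κ F (x - w₂)) := by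
    intro w₁ w₂
    have h1 := Q_M3 A₂ κ hF x w₁ w₂
    have h2 := Q_M3 A₂ κ hF x (-w₁) (-w₂)
    have hneg : x + -w₁ + -w₂ = x - (w₁ + w₂) := by abel
    rw [hneg] at h2
    simp only [← sub_eq_add_neg, Q_neg A₂ κ hF] at h2
    have hneg2 : Q A₂ κ F (-w₁ - w₂) = Q A₂ κ F (w₁ + w₂) := by
      have e : -w₁ - w₂ = -(w₁ + w₂) := by abel
      rw [e, Q_neg A₂ κ hF]
    rw [hneg2] at h2
    have ha : x + w₁ + w₂ = x + (w₁ + w₂) := by abel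
    rw [ha] at h1
    linarith
  apply Complex.ext
  · simp only [Bf_re, Complex.add_re, key y₁ y₂]; ring
  · have hs : Complex.I • (y₁ + y₂) = Complex.I • y₁ + Complex.I • y₂ := smul_add _ _ _
    simp only [Bf_im, Complex.add_im, hs, key (Complex.I • y₁) (Complex.I • y₂)]; ring

lemma Bf_zero_left (hF : MeasurableSet F) (y : H) : Bf A₂ κ F 0 y = 0 := by
  have h := Bf_add_left A₂ κ hF 0 0 y
  rw [add_zero] at h
  linear_combination -h

lemma Bf_neg_right (x y : H) : Bf A₂ κ F x (-y) = -Bf A₂ κ F x y := by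
  apply Complex.ext
  · simp only [Bf_re, Complex.neg_re, ← sub_eq_add_neg, sub_neg_eq_add]; ring
  · simp only [Bf_im, Complex.neg_im, smul_neg, ← sub_eq_add_neg, sub_neg_eq_add]; ring

lemma Bf_neg_left (hF : MeasurableSet F) (x y : H) : Bf A₂ κ F (-x) y = -Bf A₂ κ F x y := by
  have key : ∀ w : H, -x + w = -(x - w) := fun w => by abel
  have key2 : ∀ w : H, -x - w = -(x + w) := fun w => by abel
  apply Complex.ext
  · simp only [Bf_re, Complex.neg_re, key, key2, Q_neg A₂ κ hF]; ring
  · simp only [Bf_im, Complex.neg_im, key, key2, Q_neg A₂ κ hF]; ring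

lemma Bf_I_right (hF : MeasurableSet F) (x y : H) :
    Bf A₂ κ F x (Complex.I • y) = -Complex.I * Bf A₂ κ F x y := by
  have hII : Complex.I • (Complex.I • y) = -y := by
    rw [smul_smul, Complex.I_mul_I, neg_smul, one_smul]
  apply Complex.ext
  · simp only [Bf_re, Bf_im, Complex.mul_re, Complex.neg_re, Complex.neg_im, Complex.I_re,
      Complex.I_im]
    ring
  · simp only [Bf_im, Bf_re, Complex.mul_im, Complex.neg_re, Complex.neg_im, Complex.I_re,
      Complex.I_im, hII, ← sub_eq_add_neg, sub_neg_eq_add]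
    ring

lemma Bf_I_left (hF : MeasurableSet F) (x y : H) :
    Bf A₂ κ F (Complex.I • x) y = Complex.I * Bf A₂ κ F x y := by
  have e1 : Complex.I • x + y = Complex.I • (x - Complex.I • y) := by
    rw [smul_sub, smul_smul, Complex.I_mul_I, neg_smul, one_smul, sub_neg_eq_add]
  have e2 : Complex.I • x - y = Complex.I • (x + Complex.I • y) := by
    rw [smul_add, smul_smul, Complex.I_mul_I, neg_smul, one_smul, ← sub_eq_add_neg]
  have e3 : Complex.I • x + Complex.I • y = Complex.I • (x + y) := (smul_add _ _ _).symm
  have e4 : Complex.I • x - Complex.I • y = Complex.I • (x - y) := (smul_sub _ _ _).symm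
  have hQI : ∀ z : H, Q A₂ κ F (Complex.I • z) = Q A₂ κ F z := by
    intro z
    rw [Q_smul A₂ κ hF]
    simp
  apply Complex.ext
  · simp only [Bf_re, Bf_im, e1, e2, hQI, Complex.mul_re, Complex.I_re, Complex.I_im]
    ring
  · simp only [Bf_im, Bf_re, e3, e4, hQI, Complex.mul_im, Complex.I_re, Complex.I_im]
    ring

lemma Bf_conj (hF : MeasurableSet F) (x y : H) :
    Bf A₂ κ F y x = (starRingEnd ℂ) (Bf A₂ κ F x y) := by
  have e1 : y + Complex.I • x = Complex.I • (x - Complex.I • y) := by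
    rw [smul_sub, smul_smul, Complex.I_mul_I, neg_smul, one_smul, sub_neg_eq_add, add_comm]
  have e2 : y - Complex.I • x = -(Complex.I • (x + Complex.I • y)) := by
    rw [smul_add, smul_smul, Complex.I_mul_I, neg_smul, one_smul, ← sub_eq_add_neg, neg_sub]
  have hQI : ∀ z : H, Q A₂ κ F (Complex.I • z) = Q A₂ κ F z := by
    intro z; rw [Q_smul A₂ κ hF]; simp
  apply Complex.ext
  · have hc : y + x = x + y := add_comm y x
    have hc2 : y - x = -(x - y) := by abel
    simp only [Bf_re, Complex.conj_re, hc, hc2, Q_neg A₂ κ hF]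
  · simp only [Bf_im, Complex.conj_im, e1, e2, Q_neg A₂ κ hF, hQI]
    ring

end Stmt7Aux

/-! ### homogeneity and boundedness of `Bf` -/
namespace Stmt7Aux
open ProbabilityTheory Set MeasureTheory
open scoped InnerProductSpace ENNReal

variable {H : Type*} [NormedAddCommGroup H] [InnerProductSpace ℂ H] [CompleteSpace H]
variable {Ω₁ Ω₂ : Type*} [MeasurableSpace Ω₁] [MeasurableSpace Ω₂]
variable (A₂ : POVM Ω₂ H) (κ : Kernel Ω₂ Ω₁) [IsMarkovKernel κ]
variable {F : Set (Ω₁ × Ω₂)}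

lemma Q_line' (hF : MeasurableSet F) (t : ℝ) (ht : 0 ≤ t) (x y : H) :
    Q A₂ κ F (x + (t : ℂ) • y) - Q A₂ κ F (x - (t : ℂ) • y)
      = t * (Q A₂ κ F (x + y) - Q A₂ κ F (x - y)) := by
  have := Q_line A₂ κ hF t ht x y
  linarith

lemma Bf_nnreal_right (hF : MeasurableSet F) (t : ℝ) (ht : 0 ≤ t) (x y : H) :
    Bf A₂ κ F x ((t : ℂ) • y) = (t : ℂ) * Bf A₂ κ F x y := by
  have hsw : Complex.I • ((t : ℂ) • y) = (t : ℂ) • (Complex.I • y) := by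
    rw [smul_smul, smul_smul, mul_comm]
  apply Complex.ext
  · simp only [Bf_re, Complex.mul_re, Complex.ofReal_re, Complex.ofReal_im, Bf_im]
    rw [Q_line' A₂ κ hF t ht x y]
    ring
  · simp only [Bf_im, Complex.mul_im, Complex.ofReal_re, Complex.ofReal_im, Bf_re, hsw]
    rw [Q_line' A₂ κ hF t ht x (Complex.I • y)]
    ring

lemma Bf_nnreal_left (hF : MeasurableSet F) (t : ℝ) (ht : 0 ≤ t) (x y : H) :
    Bf A₂ κ F ((t : ℂ) • x) y = (t : ℂ) * Bf A₂ κ F x y := by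
  have key : ∀ w : H, Q A₂ κ F ((t : ℂ) • x + w) - Q A₂ κ F ((t : ℂ) • x - w)
      = t * (Q A₂ κ F (x + w) - Q A₂ κ F (x - w)) := by
    intro w
    have h := Q_line' A₂ κ hF t ht w x
    have e1 : w + (t : ℂ) • x = (t : ℂ) • x + w := add_comm _ _
    have e2 : w - (t : ℂ) • x = -((t : ℂ) • x - w) := by abel
    have e3 : w - x = -(x - w) := by abel
    have e4 : w + x = x + w := add_comm _ _
    rw [e1, e2, e3, e4, Q_neg A₂ κ hF, Q_neg A₂ κ hF] at h
    linarith
  apply Complex.ext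
  · simp only [Bf_re, Complex.mul_re, Complex.ofReal_re, Complex.ofReal_im, Bf_im, key y]
    ring
  · simp only [Bf_im, Complex.mul_im, Complex.ofReal_re, Complex.ofReal_im, Bf_re,
      key (Complex.I • y)]
    ring

lemma Bf_real_right (hF : MeasurableSet F) (t : ℝ) (x y : H) :
    Bf A₂ κ F x ((t : ℂ) • y) = (t : ℂ) * Bf A₂ κ F x y := by
  rcases le_or_gt 0 t with ht | ht
  · exact Bf_nnreal_right A₂ κ hF t ht x y
  · have h : ((t : ℂ) • y) = -(((-t : ℝ) : ℂ) • y) := by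
      push_cast; rw [neg_smul, neg_neg]
    rw [h, Bf_neg_right, Bf_nnreal_right A₂ κ hF (-t) (by linarith) x y]
    push_cast; ring

lemma Bf_real_left (hF : MeasurableSet F) (t : ℝ) (x y : H) :
    Bf A₂ κ F ((t : ℂ) • x) y = (t : ℂ) * Bf A₂ κ F x y := by
  rcases le_or_gt 0 t with ht | ht
  · exact Bf_nnreal_left A₂ κ hF t ht x y
  · have h : ((t : ℂ) • x) = -(((-t : ℝ) : ℂ) • x) := by
      push_cast; rw [neg_smul, neg_neg]
    rw [h, Bf_neg_left A₂ κ hF, Bf_nnreal_left A₂ κ hF (-t) (by linarith) x y]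
    push_cast; ring

lemma Bf_smul_left (hF : MeasurableSet F) (c : ℂ) (x y : H) :
    Bf A₂ κ F (c • x) y = c * Bf A₂ κ F x y := by
  have hdec : c • x = ((c.re : ℝ) : ℂ) • x + ((c.im : ℝ) : ℂ) • (Complex.I • x) := by
    rw [smul_smul, ← add_smul]
    congr 1
    apply Complex.ext <;> simp
  rw [hdec, Bf_add_left A₂ κ hF, Bf_real_left A₂ κ hF, Bf_real_left A₂ κ hF,
    Bf_I_left A₂ κ hF]
  linear_combination Bf A₂ κ F x y * Complex.re_add_im c

lemma Bf_smul_right (hF : MeasurableSet F) (c : ℂ) (x y : H) :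
    Bf A₂ κ F x (c • y) = (starRingEnd ℂ) c * Bf A₂ κ F x y := by
  have hdec : c • y = ((c.re : ℝ) : ℂ) • y + ((c.im : ℝ) : ℂ) • (Complex.I • y) := by
    rw [smul_smul, ← add_smul]
    congr 1
    apply Complex.ext <;> simp
  rw [hdec, Bf_add_right A₂ κ hF, Bf_real_right A₂ κ hF, Bf_real_right A₂ κ hF,
    Bf_I_right A₂ κ hF]
  have : (starRingEnd ℂ) c = (c.re : ℂ) - (c.im : ℂ) * Complex.I := by
    apply Complex.ext <;> simp
  rw [this]; ring

lemma Bf_bound_crude (hF : MeasurableSet F) (x y : H) :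
    ‖Bf A₂ κ F x y‖ ≤ ‖x‖ ^ 2 + ‖y‖ ^ 2 := by
  have par : ∀ u v : H, ‖u + v‖ ^ 2 + ‖u - v‖ ^ 2 = 2 * (‖u‖ ^ 2 + ‖v‖ ^ 2) := by
    intro u v
    simpa [pow_two] using parallelogram_law_with_norm ℂ u v
  have hQb : ∀ z : H, Q A₂ κ F z ≤ ‖z‖ ^ 2 := Q_le A₂ κ F
  have hQn : ∀ z : H, 0 ≤ Q A₂ κ F z := Q_nonneg A₂ κ F
  have hre : |(Bf A₂ κ F x y).re| ≤ (‖x‖ ^ 2 + ‖y‖ ^ 2) / 2 := by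
    rw [Bf_re, abs_div]
    have h1 : |Q A₂ κ F (x + y) - Q A₂ κ F (x - y)| ≤ ‖x + y‖ ^ 2 + ‖x - y‖ ^ 2 := by
      rw [abs_sub_le_iff]
      constructor <;> nlinarith [hQb (x + y), hQb (x - y), hQn (x + y), hQn (x - y),
        sq_nonneg ‖x + y‖, sq_nonneg ‖x - y‖]
    have h2 := par x y
    rw [h2] at h1
    rw [show |(4 : ℝ)| = 4 by norm_num]
    linarith
  have him : |(Bf A₂ κ F x y).im| ≤ (‖x‖ ^ 2 + ‖y‖ ^ 2) / 2 := by
    rw [Bf_im, abs_div]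
    have h1 : |Q A₂ κ F (x + Complex.I • y) - Q A₂ κ F (x - Complex.I • y)|
        ≤ ‖x + Complex.I • y‖ ^ 2 + ‖x - Complex.I • y‖ ^ 2 := by
      rw [abs_sub_le_iff]
      constructor <;> nlinarith [hQb (x + Complex.I • y), hQb (x - Complex.I • y),
        hQn (x + Complex.I • y), hQn (x - Complex.I • y)]
    have h2 := par x (Complex.I • y)
    have hnorm : ‖Complex.I • y‖ = ‖y‖ := by
      rw [norm_smul, Complex.norm_I, one_mul]
    rw [h2, hnorm] at h1
    rw [show |(4 : ℝ)| = 4 by norm_num]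
    linarith
  calc ‖Bf A₂ κ F x y‖ ≤ |(Bf A₂ κ F x y).re| + |(Bf A₂ κ F x y).im| :=
        Complex.norm_le_abs_re_add_abs_im _
    _ ≤ ‖x‖ ^ 2 + ‖y‖ ^ 2 := by linarith

lemma Bf_bound (hF : MeasurableSet F) (x y : H) :
    ‖Bf A₂ κ F x y‖ ≤ 2 * ‖x‖ * ‖y‖ := by
  rcases eq_or_ne x 0 with rfl | hx
  · rw [Bf_zero_left A₂ κ hF]; simp
  rcases eq_or_ne y 0 with rfl | hy
  · have h0 : Bf A₂ κ F x 0 = 0 := by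
      have h := Bf_add_right A₂ κ hF x 0 0
      rw [add_zero] at h
      linear_combination -h
    rw [h0]; simp
  have hxn : (0 : ℝ) < ‖x‖ := norm_pos_iff.mpr hx
  have hyn : (0 : ℝ) < ‖y‖ := norm_pos_iff.mpr hy
  set t : ℝ := Real.sqrt (‖y‖ / ‖x‖) with htdef
  have htpos : 0 < t := Real.sqrt_pos.mpr (by positivity)
  have htsq : t ^ 2 = ‖y‖ / ‖x‖ := Real.sq_sqrt (by positivity)
  have hinv : ((t⁻¹ : ℝ) : ℂ) = ((t : ℂ))⁻¹ := by push_cast; ring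
  have hB : Bf A₂ κ F ((t : ℂ) • x) (((t⁻¹ : ℝ) : ℂ) • y) = Bf A₂ κ F x y := by
    rw [Bf_real_left A₂ κ hF, Bf_real_right A₂ κ hF, ← mul_assoc, hinv,
      mul_inv_cancel₀ (by exact_mod_cast htpos.ne'), one_mul]
  have hb := Bf_bound_crude A₂ κ hF ((t : ℂ) • x) (((t⁻¹ : ℝ) : ℂ) • y)
  rw [hB] at hb
  have h1 : ‖(t : ℂ) • x‖ ^ 2 = t ^ 2 * ‖x‖ ^ 2 := by
    rw [norm_smul]
    simp [mul_pow, Complex.norm_of_nonneg htpos.le]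
  have h2 : ‖((t⁻¹ : ℝ) : ℂ) • y‖ ^ 2 = (t ^ 2)⁻¹ * ‖y‖ ^ 2 := by
    rw [norm_smul]
    simp [mul_pow, abs_of_nonneg (inv_nonneg.mpr htpos.le)]
  rw [h1, h2, htsq] at hb
  have : ‖y‖ / ‖x‖ * ‖x‖ ^ 2 = ‖x‖ * ‖y‖ := by field_simp
  have h3 : (‖y‖ / ‖x‖)⁻¹ * ‖y‖ ^ 2 = ‖x‖ * ‖y‖ := by field_simp
  calc ‖Bf A₂ κ F x y‖ ≤ ‖y‖ / ‖x‖ * ‖x‖ ^ 2 + (‖y‖ / ‖x‖)⁻¹ * ‖y‖ ^ 2 := hb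
    _ = 2 * ‖x‖ * ‖y‖ := by rw [this, h3]; ring

end Stmt7Aux

/-! ### the operator associated to `Bf` -/
namespace Stmt7Aux
open ProbabilityTheory Set MeasureTheory
open scoped InnerProductSpace ENNReal

variable {H : Type*} [NormedAddCommGroup H] [InnerProductSpace ℂ H] [CompleteSpace H]
variable {Ω₁ Ω₂ : Type*} [MeasurableSpace Ω₁] [MeasurableSpace Ω₂]
variable (A₂ : POVM Ω₂ H) (κ : Kernel Ω₂ Ω₁) [IsMarkovKernel κ]
variable {F : Set (Ω₁ × Ω₂)}

/-- The bounded linear functional `x ↦ Bf F x y`. -/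
noncomputable def phi (hF : MeasurableSet F) (y : H) : H →L[ℂ] ℂ :=
  LinearMap.mkContinuous
    { toFun := fun x => Bf A₂ κ F x y
      map_add' := fun x₁ x₂ => Bf_add_left A₂ κ hF x₁ x₂ y
      map_smul' := fun c x => Bf_smul_left A₂ κ hF c x y }
    (2 * ‖y‖)
    (fun x => by
      simp only [LinearMap.coe_mk, AddHom.coe_mk]
      calc ‖Bf A₂ κ F x y‖ ≤ 2 * ‖x‖ * ‖y‖ := Bf_bound A₂ κ hF x y
        _ = 2 * ‖y‖ * ‖x‖ := by ring)

lemma phi_apply (hF : MeasurableSet F) (x y : H) : phi A₂ κ hF y x = Bf A₂ κ F x y := rfl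

lemma phi_norm_le (hF : MeasurableSet F) (y : H) : ‖phi A₂ κ hF y‖ ≤ 2 * ‖y‖ :=
  LinearMap.mkContinuous_norm_le _ (by positivity) _

/-- The operator representing `Bf` via Riesz representation. -/
noncomputable def T0 (hF : MeasurableSet F) (y : H) : H :=
  (InnerProductSpace.toDual ℂ H).symm (phi A₂ κ hF y)

lemma T0_inner (hF : MeasurableSet F) (x y : H) :
    ⟪T0 A₂ κ hF y, x⟫_ℂ = Bf A₂ κ F x y := by
  rw [T0, InnerProductSpace.toDual_symm_apply]
  rfl

noncomputable def TF (hF : MeasurableSet F) : H →L[ℂ] H :=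
  LinearMap.mkContinuous
    { toFun := T0 A₂ κ hF
      map_add' := fun y₁ y₂ => by
        apply ext_inner_right ℂ
        intro v
        rw [T0_inner A₂ κ hF, inner_add_left, T0_inner A₂ κ hF, T0_inner A₂ κ hF,
          Bf_add_right A₂ κ hF]
      map_smul' := fun c y => by
        apply ext_inner_right ℂ
        intro v
        rw [T0_inner A₂ κ hF, RingHom.id_apply, inner_smul_left, T0_inner A₂ κ hF,
          Bf_smul_right A₂ κ hF] }
    2
    (fun y => by
      simp only [LinearMap.coe_mk, AddHom.coe_mk]
      have : ‖T0 A₂ κ hF y‖ = ‖phi A₂ κ hF y‖ := by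
        rw [T0]
        exact LinearIsometryEquiv.norm_map _ _
      rw [this]
      calc ‖phi A₂ κ hF y‖ ≤ 2 * ‖y‖ := phi_norm_le A₂ κ hF y
        _ = 2 * ‖y‖ := rfl)

lemma TF_inner (hF : MeasurableSet F) (x y : H) :
    ⟪TF A₂ κ hF y, x⟫_ℂ = Bf A₂ κ F x y := T0_inner A₂ κ hF x y

lemma inner_TF_self (hF : MeasurableSet F) (x : H) :
    ⟪x, TF A₂ κ hF x⟫_ℂ = ((Q A₂ κ F x : ℝ) : ℂ) := by
  rw [← inner_conj_symm, TF_inner A₂ κ hF, Bf_self A₂ κ hF, Complex.conj_ofReal]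

lemma re_inner_TF_self (hF : MeasurableSet F) (x : H) :
    (⟪x, TF A₂ κ hF x⟫_ℂ).re = Q A₂ κ F x := by
  rw [inner_TF_self A₂ κ hF, Complex.ofReal_re]

lemma TF_isPositive (hF : MeasurableSet F) : (TF A₂ κ hF).IsPositive := by
  constructor
  · intro x y
    simp only [ContinuousLinearMap.coe_coe]
    have h1 : ⟪(TF A₂ κ hF) x, y⟫_ℂ = Bf A₂ κ F y x := TF_inner A₂ κ hF y x
    have h2 : ⟪x, (TF A₂ κ hF) y⟫_ℂ = (starRingEnd ℂ) (Bf A₂ κ F x y) := by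
      rw [← inner_conj_symm, TF_inner A₂ κ hF]
    rw [h1, h2, Bf_conj A₂ κ hF]
  · intro x
    have : (TF A₂ κ hF).reApplyInnerSelf x = (⟪(TF A₂ κ hF) x, x⟫_ℂ).re := rfl
    rw [this, TF_inner A₂ κ hF, Bf_self A₂ κ hF, Complex.ofReal_re]
    exact Q_nonneg A₂ κ F x

lemma TF_univ : TF A₂ κ (MeasurableSet.univ : MeasurableSet (Set.univ : Set (Ω₁ × Ω₂)))
    = (1 : H →L[ℂ] H) := by
  apply ContinuousLinearMap.ext
  intro y
  apply ext_inner_right ℂ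
  intro v
  rw [TF_inner A₂ κ MeasurableSet.univ, ContinuousLinearMap.one_apply]
  have hpol := inner_map_polarization (LinearMap.id : H →ₗ[ℂ] H) v y
  simp only [LinearMap.id_coe, id_eq] at hpol
  rw [Bf_eq_formula, hpol]
  have hn : ∀ z : H, ⟪z, z⟫_ℂ = ((‖z‖ ^ 2 : ℝ) : ℂ) := by
    intro z
    rw [@inner_self_eq_norm_sq_to_K ℂ H _ _ _ z]
    norm_cast
  simp only [hn, Q_univ A₂ κ]

end Stmt7Aux

/-! ### the product POVM and the main theorem -/
namespace Stmt7Aux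
open ProbabilityTheory Set MeasureTheory
open scoped InnerProductSpace ENNReal Classical

variable {H : Type*} [NormedAddCommGroup H] [InnerProductSpace ℂ H] [CompleteSpace H]
variable {Ω₁ Ω₂ : Type*} [MeasurableSpace Ω₁] [MeasurableSpace Ω₂]
variable (A₂ : POVM Ω₂ H) (κ : Kernel Ω₂ Ω₁) [IsMarkovKernel κ]

lemma pm_prod (x : H) {E₁ : Set Ω₁} {E₂ : Set Ω₂} (h₁ : MeasurableSet E₁)
    (h₂ : MeasurableSet E₂) :
    pm A₂ κ x (E₁ ×ˢ E₂) = ∫⁻ y in E₂, κ y E₁ ∂(m A₂ x) := by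
  rw [pm, Measure.map_apply measurable_swap (h₁.prod h₂), Set.preimage_swap_prod,
    Measure.compProd_apply_prod h₂ h₁]

lemma integral_rect (x : H) {E₁ : Set Ω₁} {E₂ : Set Ω₂} (h₁ : MeasurableSet E₁)
    (h₂ : MeasurableSet E₂) :
    ∫ y in E₂, (κ y E₁).toReal ∂(A₂.measure x) = Q A₂ κ (E₁ ×ˢ E₂) x := by
  have hm : A₂.measure x = m A₂ x := rfl
  rw [hm, Q, pm_prod A₂ κ x h₁ h₂]
  exact integral_toReal ((Kernel.measurable_coe κ h₁).aemeasurable)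
    (Filter.Eventually.of_forall fun y => measure_lt_top (κ y) E₁)

noncomputable def prodPOVM : POVM (Ω₁ × Ω₂) H where
  toFun F := if h : MeasurableSet F then TF A₂ κ h else 0
  pos F hF := by show (if h : MeasurableSet F then TF A₂ κ h else 0).IsPositive; rw [dif_pos hF]; exact TF_isPositive A₂ κ hF
  map_univ := by show (if h : MeasurableSet (Set.univ : Set (Ω₁ × Ω₂)) then TF A₂ κ h else 0) = 1; rw [dif_pos MeasurableSet.univ]; exact TF_univ A₂ κ
  measure x := pm A₂ κ x
  measure_apply x E hE := by
    show pm A₂ κ x E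
      = ENNReal.ofReal (⟪x, (if h : MeasurableSet E then TF A₂ κ h else 0) x⟫_ℂ).re
    rw [dif_pos hE, re_inner_TF_self A₂ κ hE, ofReal_Q]

lemma prodPOVM_toFun {F : Set (Ω₁ × Ω₂)} (hF : MeasurableSet F) :
    (prodPOVM A₂ κ).toFun F = TF A₂ κ hF := by
  show (if h : MeasurableSet F then TF A₂ κ h else 0) = TF A₂ κ hF
  rw [dif_pos hF]

lemma prodPOVM_rect {E₁ : Set Ω₁} {E₂ : Set Ω₂} (h₁ : MeasurableSet E₁)
    (h₂ : MeasurableSet E₂) (x : H) :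
    (⟪x, (prodPOVM A₂ κ).toFun (E₁ ×ˢ E₂) x⟫_ℂ).re
      = ∫ y in E₂, (κ y E₁).toReal ∂(A₂.measure x) := by
  rw [prodPOVM_toFun A₂ κ (h₁.prod h₂), re_inner_TF_self A₂ κ (h₁.prod h₂),
    integral_rect A₂ κ x h₁ h₂]

end Stmt7Aux

variable {H : Type*} [NormedAddCommGroup H] [InnerProductSpace ℂ H] [CompleteSpace H]

open ProbabilityTheory in
/-- For a POVM `A₂` on `Ω₂` and a regular Markov kernel `κ` from `Ω₂`
to `Ω₁`, there exists a POVM `A₁₂` on the product space with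
`A₁₂(E₁ × E₂) = ∫_{E₂} κ(E₁|y) dA₂(y)`, unique on the product σ-algebra. -/
theorem stmt7 {Ω₁ Ω₂ : Type*} [MeasurableSpace Ω₁] [MeasurableSpace Ω₂]
    (A₂ : POVM Ω₂ H) (κ : Kernel Ω₂ Ω₁) [IsMarkovKernel κ] :
    ∃ A₁₂ : POVM (Ω₁ × Ω₂) H,
      (∀ E₁ E₂, MeasurableSet E₁ → MeasurableSet E₂ → ∀ x : H,
        (⟪x, A₁₂.toFun (E₁ ×ˢ E₂) x⟫_ℂ).re = ∫ y in E₂, (κ y E₁).toReal ∂(A₂.measure x)) ∧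
      ∀ B : POVM (Ω₁ × Ω₂) H,
        (∀ E₁ E₂, MeasurableSet E₁ → MeasurableSet E₂ → ∀ x : H,
          (⟪x, B.toFun (E₁ ×ˢ E₂) x⟫_ℂ).re = ∫ y in E₂, (κ y E₁).toReal ∂(A₂.measure x)) →
        ∀ F : Set (Ω₁ × Ω₂), MeasurableSet F → B.toFun F = A₁₂.toFun F := by
  classical
  open Stmt7Aux in
  refine ⟨prodPOVM A₂ κ, fun E₁ E₂ h₁ h₂ x => prodPOVM_rect A₂ κ h₁ h₂ x, ?_⟩
  intro B hB F hF
  -- the scalar measures of `B` agree with `pm`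
  have hmeq : ∀ x : H, B.measure x = Stmt7Aux.pm A₂ κ x := by
    intro x
    haveI : IsFiniteMeasure (B.measure x) := ⟨by
      rw [B.measure_apply x Set.univ MeasurableSet.univ, B.map_univ]
      exact ENNReal.ofReal_lt_top⟩
    refine ext_of_generate_finite _ generateFrom_prod.symm isPiSystem_prod ?_ ?_
    · rintro s ⟨E₁, h₁, E₂, h₂, rfl⟩
      have h₁' : MeasurableSet E₁ := h₁
      have h₂' : MeasurableSet E₂ := h₂
      rw [B.measure_apply x _ (h₁'.prod h₂'), hB E₁ E₂ h₁' h₂' x,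
        Stmt7Aux.integral_rect A₂ κ x h₁' h₂', Stmt7Aux.ofReal_Q]
    · rw [B.measure_apply x Set.univ MeasurableSet.univ, B.map_univ, Stmt7Aux.pm_univ]
      congr 1
      have := @inner_self_eq_norm_sq ℂ H _ _ _ x
      simpa using this
  -- the quadratic forms agree
  have hre : ∀ x : H, (⟪x, B.toFun F x⟫_ℂ).re = (⟪x, Stmt7Aux.TF A₂ κ hF x⟫_ℂ).re := by
    intro x
    have h1 : ENNReal.ofReal (⟪x, B.toFun F x⟫_ℂ).re
        = ENNReal.ofReal (Stmt7Aux.Q A₂ κ F x) := by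
      rw [← B.measure_apply x F hF, hmeq, Stmt7Aux.ofReal_Q]
    have hn1 : 0 ≤ (⟪x, B.toFun F x⟫_ℂ).re := by
      have := (B.pos F hF).re_inner_nonneg_right x
      simpa using this
    have h2 := (ENNReal.ofReal_eq_ofReal_iff hn1 (Stmt7Aux.Q_nonneg A₂ κ F x)).mp h1
    rw [h2, Stmt7Aux.re_inner_TF_self A₂ κ hF]
  -- deduce operator equality
  have hsa : IsSelfAdjoint (B.toFun F - Stmt7Aux.TF A₂ κ hF) :=
    ((B.pos F hF).isSelfAdjoint).sub (Stmt7Aux.TF_isPositive A₂ κ hF).isSelfAdjoint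
  have hz : ∀ x : H, ⟪(B.toFun F - Stmt7Aux.TF A₂ κ hF) x, x⟫_ℂ = 0 := by
    intro x
    set D := B.toFun F - Stmt7Aux.TF A₂ κ hF with hD
    have hsym := (ContinuousLinearMap.isSelfAdjoint_iff_isSymmetric.mp hsa) x x
    simp only [ContinuousLinearMap.coe_coe] at hsym
    have hconj : (starRingEnd ℂ) ⟪D x, x⟫_ℂ = ⟪x, D x⟫_ℂ := inner_conj_symm x (D x)
    have him : (⟪D x, x⟫_ℂ).im = 0 := by
      have : (starRingEnd ℂ) ⟪D x, x⟫_ℂ = ⟪D x, x⟫_ℂ := by rw [hconj, ← hsym]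
      have h' := congrArg Complex.im this
      simp only [Complex.conj_im] at h'
      linarith
    have hre0 : (⟪D x, x⟫_ℂ).re = 0 := by
      have h3 : ⟪x, D x⟫_ℂ = ⟪x, B.toFun F x⟫_ℂ - ⟪x, Stmt7Aux.TF A₂ κ hF x⟫_ℂ := by
        rw [hD, ContinuousLinearMap.sub_apply, inner_sub_right]
      have h4 : (⟪D x, x⟫_ℂ).re = (⟪x, D x⟫_ℂ).re := by
        rw [← hconj, Complex.conj_re]
      rw [h4, h3, Complex.sub_re, hre x, sub_self]
    exact Complex.ext hre0 him
  have hzero : B.toFun F - Stmt7Aux.TF A₂ κ hF = 0 := by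
    have h0 := (inner_map_self_eq_zero
      ((B.toFun F - Stmt7Aux.TF A₂ κ hF : H →L[ℂ] H) : H →ₗ[ℂ] H)).mp
      (fun x => by exact hz x)
    apply ContinuousLinearMap.ext
    intro x
    have := LinearMap.ext_iff.mp h0 x
    simpa using this
  rw [Stmt7Aux.prodPOVM_toFun A₂ κ hF]
  exact sub_eq_zero.mp hzero
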